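/- arXiv:1507.07573 — 3 statements merged into one kernel-verified Lean document; each statement's English description precedes it below -/
import Mathlib

section
/- Every cycle C_n with n ≥ 3 satisfies χ''_Σ(C_n) ≤ Δ(C_n) + 3 = 5; i.e., C_n admits a proper total 5-coloring whose vertex values s_c(v) = c(v) + Σ_{uv∈E} c(uv) distinguish adjacent vertices. -/
open Finset SimpleGraph

variable {V : Type*}

/-- Sum of the colors of the edges incident with a vertex. -/
def edgeVal (G : SimpleGraph V) [Fintype V] [DecidableRel G.Adj]
    (ce : Sym2 V → ℕ) (v : V) : ℕ :=
  ∑ u ∈ G.neighborFinset v, ce s(v, u)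

/-- The value of a vertex: its own color plus the sum of its incident edge colors. -/
def totalVal (G : SimpleGraph V) [Fintype V] [DecidableRel G.Adj]
    (cv : V → ℕ) (ce : Sym2 V → ℕ) (v : V) : ℕ :=
  cv v + edgeVal G ce v

/-- `cv, ce` form a proper total `k`-coloring of `G` with colors in `{1,…,k}`:
adjacent vertices get distinct colors, incident edges get distinct colors, and each
vertex gets a color distinct from those of its incident edges. -/
def IsProperTotal (G : SimpleGraph V) (k : ℕ) (cv : V → ℕ) (ce : Sym2 V → ℕ) : Prop :=
  (∀ v, cv v ∈ Finset.Icc 1 k) ∧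
  (∀ e ∈ G.edgeSet, ce e ∈ Finset.Icc 1 k) ∧
  (∀ ⦃u v⦄, G.Adj u v → cv u ≠ cv v) ∧
  (∀ ⦃e f⦄, e ∈ G.edgeSet → f ∈ G.edgeSet → e ≠ f → (∃ v, v ∈ e ∧ v ∈ f) → ce e ≠ ce f) ∧
  (∀ ⦃u v⦄, G.Adj u v → ce s(u, v) ≠ cv u)

/-- The total chromatic number `χ''(G)`. -/
noncomputable def totalChrom (G : SimpleGraph V) : ℕ :=
  sInf {k | ∃ cv ce, IsProperTotal G k cv ce}

/-- The neighbor sum distinguishing total chromatic number `χ''_Σ(G)`. -/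
noncomputable def nsdTotalChrom (G : SimpleGraph V) [Fintype V] [DecidableRel G.Adj] : ℕ :=
  sInf {k | ∃ cv ce, IsProperTotal G k cv ce ∧
    ∀ ⦃u v⦄, G.Adj u v → totalVal G cv ce u ≠ totalVal G cv ce v}


private def pvC (n i : ℕ) : ℕ :=
  if i + 1 = n ∧ n % 3 = 1 then 2
  else if i % 3 = 0 then 5 else if i % 3 = 1 then 4 else 1

private def peC (n i : ℕ) : ℕ :=
  if i + 1 = n ∧ n % 3 = 1 then 4 else i % 3 + 1

private lemma succVal {m : ℕ} (v : Fin (m + 3)) :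
    (v + 1).val = if v.val = m + 2 then 0 else v.val + 1 := by
  have : (v + 1).val = (v.val + 1) % (m + 3) := by
    rw [Fin.add_def]; simp
  rw [this]
  split_ifs with h
  · rw [h]; exact Nat.mod_self _
  · exact Nat.mod_eq_of_lt (by have := v.isLt; omega)

private lemma predVal {m : ℕ} (v : Fin (m + 3)) :
    (v - 1).val = if v.val = 0 then m + 2 else v.val - 1 := by
  rw [Fin.coe_sub_one]
  congr 1
  exact propext Fin.ext_iff

private lemma succRel {m : ℕ} (v : Fin (m + 3)) :
    ((v + 1).val = v.val + 1 ∧ v.val + 1 < m + 3) ∨ (v.val + 1 = m + 3 ∧ (v + 1).val = 0) := by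
  have h := succVal v
  have hv := v.isLt
  split_ifs at h with hc
  · right; omega
  · left; omega

private lemma predRel {m : ℕ} (v : Fin (m + 3)) :
    ((v - 1).val + 1 = v.val) ∨ (v.val = 0 ∧ (v - 1).val = m + 2) := by
  have h := predVal v
  have hv := v.isLt
  split_ifs at h with hc
  · right; omega
  · left; omega

private lemma adjIff {m : ℕ} {a b : Fin (m + 3)} :
    (cycleGraph (m + 3)).Adj a b ↔ b = a + 1 ∨ a = b + 1 := by
  rw [cycleGraph_adj]
  constructor
  · rintro (h | h)
    · right; rw [sub_eq_iff_eq_add] at h; exact h.trans (add_comm 1 b)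
    · left; rw [sub_eq_iff_eq_add] at h; exact h.trans (add_comm 1 a)
  · rintro (h | h)
    · right; rw [sub_eq_iff_eq_add]; exact h.trans (add_comm a 1)
    · left; rw [sub_eq_iff_eq_add]; exact h.trans (add_comm b 1)

private lemma no_two_cycle {m : ℕ} {u v : Fin (m + 3)} (h1 : v = u + 1) (h2 : u = v + 1) :
    False := by
  have hs := succRel u
  have hs' := succRel v
  have h1' := congrArg Fin.val h1
  have h2' := congrArg Fin.val h2
  have := u.isLt
  have := v.isLt
  omega

private def cef (m : ℕ) : Sym2 (Fin (m + 3)) → ℕ :=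
  Sym2.lift ⟨fun u v => if v = u + 1 then peC (m + 3) u.val
      else if u = v + 1 then peC (m + 3) v.val else 0, by
    intro u v
    show (if v = u + 1 then peC (m + 3) u.val else if u = v + 1 then peC (m + 3) v.val else 0) = (if u = v + 1 then peC (m + 3) v.val else if v = u + 1 then peC (m + 3) u.val else 0)
    rcases eq_or_ne v (u + 1) with h1 | h1 <;> rcases eq_or_ne u (v + 1) with h2 | h2
    · exact absurd h2 (fun h => no_two_cycle h1 h)
    · rw [if_pos h1, if_neg h2, if_pos h1]
    · rw [if_neg h1, if_pos h2, if_pos h2]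
    · rw [if_neg h1, if_neg h2, if_neg h2, if_neg h1]⟩

private def cvf (m : ℕ) : Fin (m + 3) → ℕ := fun v => pvC (m + 3) v.val

private lemma cef_eval {m : ℕ} (u : Fin (m + 3)) : cef m s(u, u + 1) = peC (m + 3) u.val := by
  simp [cef]

private lemma cef_eval' {m : ℕ} (u : Fin (m + 3)) : cef m s(u, u - 1) = peC (m + 3) (u - 1).val := by
  rw [Sym2.eq_swap]
  have h := cef_eval (u - 1)
  rwa [sub_add_cancel] at h

private lemma pvC_mem (n i : ℕ) : pvC n i ∈ Finset.Icc 1 5 := by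
  rw [Finset.mem_Icc]; unfold pvC; split_ifs <;> omega

private lemma peC_mem (n i : ℕ) : peC n i ∈ Finset.Icc 1 5 := by
  rw [Finset.mem_Icc]; unfold peC; split_ifs <;> omega

private lemma pvC_ne (n i j : ℕ) (h3 : 3 ≤ n) (hi : i < n)
    (hj : (j = i + 1 ∧ i + 1 < n) ∨ (i + 1 = n ∧ j = 0)) : pvC n i ≠ pvC n j := by
  unfold pvC; split_ifs <;> omega

private lemma peC_ne (n i j : ℕ) (h3 : 3 ≤ n) (hi : i < n)
    (hj : (j = i + 1 ∧ i + 1 < n) ∨ (i + 1 = n ∧ j = 0)) : peC n i ≠ peC n j := by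
  unfold peC; split_ifs <;> omega

private lemma peC_ne_pvC (n i : ℕ) (h3 : 3 ≤ n) (hi : i < n) : peC n i ≠ pvC n i := by
  unfold peC pvC; split_ifs <;> omega

private lemma peC_ne_pvC' (n i j : ℕ) (h3 : 3 ≤ n) (hi : i < n)
    (hj : (j = i + 1 ∧ i + 1 < n) ∨ (i + 1 = n ∧ j = 0)) : peC n i ≠ pvC n j := by
  unfold peC pvC; split_ifs <;> omega

private lemma sumC_ne (n i j k : ℕ) (h3 : 3 ≤ n) (hi : i < n)
    (hj : (j = i + 1 ∧ i + 1 < n) ∨ (i + 1 = n ∧ j = 0))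
    (hk : (k + 1 = i) ∨ (i = 0 ∧ k + 1 = n)) :
    pvC n i + (peC n k + peC n i) ≠ pvC n j + (peC n i + peC n j) := by
  unfold pvC peC; split_ifs <;> omega

private lemma edge_core {m : ℕ} (x y : Fin (m + 3)) (hne : s(x, x + 1) ≠ s(y, y + 1))
    (hsh : ∃ w, w ∈ s(x, x + 1) ∧ w ∈ s(y, y + 1)) :
    cef m s(x, x + 1) ≠ cef m s(y, y + 1) := by
  obtain ⟨w, hw1, hw2⟩ := hsh
  rw [Sym2.mem_iff] at hw1 hw2
  rw [cef_eval, cef_eval]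
  rcases hw1 with rfl | rfl
  · rcases hw2 with rfl | h
    · exact absurd rfl hne
    · exact (peC_ne (m + 3) y.val w.val (by omega) y.isLt
        (by have := succRel y; subst h; tauto)).symm
  · rcases hw2 with h | h
    · rw [← h] at hne ⊢
      exact peC_ne (m + 3) x.val (x + 1).val (by omega) x.isLt (succRel x)
    · have : x = y := add_right_cancel h
      exact absurd (by rw [this]) hne

private lemma hval {m : ℕ} (v : Fin (m + 3)) :
    totalVal (cycleGraph (m + 3)) (cvf m) (cef m) v
      = pvC (m + 3) v.val + (peC (m + 3) (v - 1).val + peC (m + 3) v.val) := by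
  have hne : v - 1 ≠ v + 1 := by
    intro h
    have h' := congrArg Fin.val h
    have h1 := succRel v
    have h2 := predRel v
    have := v.isLt
    omega
  rw [totalVal, edgeVal, cycleGraph_neighborFinset, Finset.sum_pair hne, cef_eval',
    cef_eval, cvf]

/-- Every cycle `Cₙ` with `n ≥ 3` satisfies `χ''_Σ(Cₙ) ≤ Δ(Cₙ) + 3 = 5`. -/
theorem nsdTotalChrom_cycleGraph_le_five (n : ℕ) (hn : 3 ≤ n) :
    nsdTotalChrom (cycleGraph n) ≤ 5 := by
  obtain ⟨m, rfl⟩ : ∃ m, n = m + 3 := ⟨n - 3, by omega⟩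
  apply Nat.sInf_le
  rw [Set.mem_setOf_eq]
  refine ⟨cvf m, cef m, ⟨fun v => pvC_mem _ _, ?_, ?_, ?_, ?_⟩, ?_⟩
  · intro e
    induction e using Sym2.ind with
    | _ a b =>
      intro he
      rw [SimpleGraph.mem_edgeSet, adjIff] at he
      rcases he with rfl | rfl
      · rw [cef_eval]; exact peC_mem _ _
      · rw [Sym2.eq_swap, cef_eval]; exact peC_mem _ _
  · intro u v huv
    rw [adjIff] at huv
    rcases huv with rfl | rfl
    · exact pvC_ne (m + 3) u.val (u + 1).val (by omega) u.isLt (succRel u)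
    · exact (pvC_ne (m + 3) v.val (v + 1).val (by omega) v.isLt (succRel v)).symm
  · intro e f
    induction e using Sym2.ind with
    | _ a b =>
    induction f using Sym2.ind with
    | _ c d =>
      intro he hf hef hsh
      rw [SimpleGraph.mem_edgeSet, adjIff] at he hf
      obtain ⟨x, hx⟩ : ∃ x, s(a, b) = s(x, x + 1) := by
        rcases he with rfl | rfl
        exacts [⟨a, rfl⟩, ⟨b, Sym2.eq_swap⟩]
      obtain ⟨y, hy⟩ : ∃ y, s(c, d) = s(y, y + 1) := by
        rcases hf with rfl | rfl
        exacts [⟨c, rfl⟩, ⟨d, Sym2.eq_swap⟩]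
      rw [hx, hy] at hef hsh ⊢
      exact edge_core x y hef hsh
  · intro u v huv
    rw [adjIff] at huv
    rcases huv with rfl | rfl
    · rw [cef_eval]
      exact peC_ne_pvC (m + 3) u.val (by omega) u.isLt
    · rw [Sym2.eq_swap, cef_eval]
      exact peC_ne_pvC' (m + 3) v.val (v + 1).val (by omega) v.isLt (succRel v)
  · intro u v huv
    rw [adjIff] at huv
    have key : ∀ w : Fin (m + 3),
        totalVal (cycleGraph (m + 3)) (cvf m) (cef m) w
          ≠ totalVal (cycleGraph (m + 3)) (cvf m) (cef m) (w + 1) := by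
      intro w
      rw [hval, hval, add_sub_cancel_right]
      exact sumC_ne (m + 3) w.val (w + 1).val (w - 1).val (by omega) w.isLt (succRel w)
        (by have := predRel w; have := w.isLt; omega)
    rcases huv with rfl | rfl
    · exact key u
    · exact (key v).symm
end

section
/- The complete graph K_n for n ≥ 2 satisfies χ''_Σ(K_n) ≤ n + 2 = Δ(K_n) + 3. -/
open Finset SimpleGraph

variable {V : Type*}

instance (n : ℕ) : DecidableRel (completeGraph (Fin n)).Adj :=
  fun a b => inferInstanceAs (Decidable (a ≠ b))

private lemma modCase (m x : ℕ) (hx : x < 2*m) :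
    x % m = x ∨ (m ≤ x ∧ x % m + m = x) := by
  rcases lt_or_ge x m with h | h
  · exact Or.inl (Nat.mod_eq_of_lt h)
  · right
    refine ⟨h, ?_⟩
    rw [Nat.mod_eq_sub_mod h, Nat.mod_eq_of_lt (by omega)]
    omega

private lemma shift_inj (m w x y : ℕ) (hx : x < m) (hy : y < m)
    (h : (w + x) % m = (w + y) % m) : x = y := by
  rw [← Nat.mod_add_mod] at h
  rw [← Nat.mod_add_mod w m y] at h
  have hw := Nat.mod_lt w (show 0 < m by omega)
  rcases modCase m (w % m + x) (by omega) with h1 | h1 <;>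
    rcases modCase m (w % m + y) (by omega) with h2 | h2 <;> omega

private lemma sum_range_mod (m w : ℕ) (hw : w < m) :
    ∑ u ∈ Finset.range m, (u + w) % m = ∑ u ∈ Finset.range m, u := by
  haveI : NeZero m := ⟨by omega⟩
  rw [← Fin.sum_univ_eq_sum_range (fun u => (u + w) % m),
      ← Fin.sum_univ_eq_sum_range (fun u => u)]
  have h1 : ∀ u : Fin m, (u.val + w) % m = ((u + ⟨w, hw⟩ : Fin m) : ℕ) := by
    intro u
    rw [Fin.val_add]
  rw [Finset.sum_congr rfl (fun u _ => h1 u)]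
  exact Equiv.sum_comp (Equiv.addRight (⟨w, hw⟩ : Fin m)) (fun u : Fin m => (u : ℕ))

/-- The complete graph `Kₙ` with `n ≥ 2` satisfies `χ''_Σ(Kₙ) ≤ n + 2 = Δ(Kₙ) + 3`. -/
theorem nsdTotalChrom_completeGraph_le (n : ℕ) (hn : 2 ≤ n) :
    nsdTotalChrom (completeGraph (Fin n)) ≤ n + 2 := by
  apply Nat.sInf_le
  obtain ⟨m, hnm, hmn2, hodd, hcase⟩ :
      ∃ m, n < m ∧ m ≤ n + 2 ∧ m % 2 = 1 ∧ (m = n + 1 ∨ (m = n + 2 ∧ n % 2 = 1)) := by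
    rcases Nat.even_or_odd n with h | h
    · exact ⟨n + 1, by omega, by omega, by rcases h with ⟨k, hk⟩; omega, Or.inl rfl⟩
    · exact ⟨n + 2, by omega, by omega, by rcases h with ⟨k, hk⟩; omega,
        Or.inr ⟨rfl, by rcases h with ⟨k, hk⟩; omega⟩⟩
  have h0 : 0 < m := by omega
  set cv : Fin n → ℕ := fun v => 2 * v.val % m + 1 with hcv
  set ce : Sym2 (Fin n) → ℕ := Sym2.lift ⟨fun a b => (a.val + b.val) % m + 1, by
    intro a b; simp [Nat.add_comm]⟩ with hce
  have hceab : ∀ a b : Fin n, ce s(a, b) = (a.val + b.val) % m + 1 := by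
    intro a b; rw [hce, Sym2.lift_mk]
  refine ⟨cv, ce, ⟨?_, ?_, ?_, ?_, ?_⟩, ?_⟩
  · -- vertex colors in range
    intro v
    have := Nat.mod_lt (2 * v.val) h0
    simp only [hcv, Finset.mem_Icc]
    omega
  · -- edge colors in range
    intro e he
    induction e using Sym2.ind with
    | _ a b =>
      rw [hceab]
      have := Nat.mod_lt (a.val + b.val) h0
      simp only [Finset.mem_Icc]
      omega
  · -- adjacent vertex colors distinct
    intro a b hab h
    simp only [hcv] at h
    have h' : 2 * a.val % m = 2 * b.val % m := by omega
    have ha : a.val < m := by have := a.isLt; omega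
    have hb : b.val < m := by have := b.isLt; omega
    have : a.val = b.val := by
      rcases modCase m (2 * a.val) (by omega) with h1 | h1 <;>
        rcases modCase m (2 * b.val) (by omega) with h2 | h2 <;> omega
    exact hab (Fin.ext this)
  · -- incident edges distinct colors
    intro e f he hf hef hshare
    induction e using Sym2.ind with
    | _ a b =>
    induction f using Sym2.ind with
    | _ c d =>
      obtain ⟨v, hv1, hv2⟩ := hshare
      rw [Sym2.mem_iff] at hv1 hv2
      rw [hceab, hceab]
      intro h
      have h' : (a.val + b.val) % m = (c.val + d.val) % m := by omega
      have ha : a.val < m := by have := a.isLt; omega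
      have hb : b.val < m := by have := b.isLt; omega
      have hc : c.val < m := by have := c.isLt; omega
      have hd : d.val < m := by have := d.isLt; omega
      rcases hv1 with rfl | rfl
      · rcases hv2 with rfl | rfl
        · -- e = s(v,b), f = s(v,d)
          have : b.val = d.val := shift_inj m v.val b.val d.val hb hd h'
          exact hef (by rw [Fin.ext this])
        · -- e = s(v,b), f = s(c,v)
          rw [Nat.add_comm c.val v.val] at h'
          have : b.val = c.val := shift_inj m v.val b.val c.val hb hc h'
          exact hef (by rw [Fin.ext this]; exact Sym2.eq_swap)
      · rcases hv2 with rfl | rfl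
        · -- e = s(a,v), f = s(v,d)
          rw [Nat.add_comm a.val v.val] at h'
          have : a.val = d.val := shift_inj m v.val a.val d.val ha hd h'
          exact hef (by rw [Fin.ext this]; exact Sym2.eq_swap)
        · -- e = s(a,v), f = s(c,v)
          rw [Nat.add_comm a.val v.val, Nat.add_comm c.val v.val] at h'
          have : a.val = c.val := shift_inj m v.val a.val c.val ha hc h'
          exact hef (by rw [Fin.ext this])
  · -- vertex color distinct from incident edge colors
    intro u v huv h
    rw [hceab] at h
    simp only [hcv] at h
    have h' : (u.val + v.val) % m = (u.val + u.val) % m := by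
      rw [show u.val + u.val = 2 * u.val by ring]; omega
    have hv : v.val < m := by have := v.isLt; omega
    have hu : u.val < m := by have := u.isLt; omega
    exact huv (Fin.ext (shift_inj m u.val v.val u.val hv hu h')).symm
  · -- distinguishing sums
    have hNB : ∀ v : Fin n, (completeGraph (Fin n)).neighborFinset v = Finset.univ.erase v := by
      intro v
      ext u
      simp [SimpleGraph.mem_neighborFinset, completeGraph, ne_comm]
    have key : ∀ v : Fin n,
        totalVal (completeGraph (Fin n)) cv ce v + (∑ u ∈ Finset.Ico n m, (v.val + u) % m)
          = n + ∑ u ∈ Finset.range m, u := by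
      intro v
      unfold totalVal edgeVal
      rw [hNB v]
      rw [Finset.sum_congr rfl (fun u _ => hceab v u)]
      rw [Finset.sum_add_distrib]
      have hcard : (Finset.univ.erase v).card = n - 1 := by
        rw [Finset.card_erase_of_mem (Finset.mem_univ v)]
        simp
      rw [Finset.sum_const, hcard, smul_eq_mul, mul_one]
      have h1 : (∑ u ∈ Finset.univ.erase v, (v.val + u.val) % m) + (v.val + v.val) % m
          = ∑ u : Fin n, (v.val + u.val) % m :=
        Finset.sum_erase_add _ _ (Finset.mem_univ v)
      have h2 : ∑ u : Fin n, (v.val + u.val) % m = ∑ u ∈ Finset.range n, (v.val + u) % m :=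
        Fin.sum_univ_eq_sum_range (fun u => (v.val + u) % m) n
      have h3 : ∑ u ∈ Finset.range n, (v.val + u) % m + ∑ u ∈ Finset.Ico n m, (v.val + u) % m
          = ∑ u ∈ Finset.range m, (v.val + u) % m := by
        rw [Finset.range_eq_Ico, Finset.range_eq_Ico]
        exact Finset.sum_Ico_consecutive (fun u => (v.val + u) % m) (Nat.zero_le n) (le_of_lt hnm)
      have h4 : ∑ u ∈ Finset.range m, (v.val + u) % m = ∑ u ∈ Finset.range m, u := by
        rw [Finset.sum_congr rfl (fun u _ => by rw [Nat.add_comm])]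
        exact sum_range_mod m v.val (by have := v.isLt; omega)
      have h5 : (v.val + v.val) % m = 2 * v.val % m := by
        rw [show v.val + v.val = 2 * v.val by ring]
      simp only [hcv]
      omega
    intro a b hab h
    have ka := key a
    have kb := key b
    rw [h] at ka
    have hE : (∑ u ∈ Finset.Ico n m, (a.val + u) % m)
        = ∑ u ∈ Finset.Ico n m, (b.val + u) % m := by omega
    have ha : a.val < n := a.isLt
    have hb : b.val < n := b.isLt
    have hvne : a.val ≠ b.val := fun hh => hab (Fin.ext hh)
    rcases hcase with rfl | ⟨rfl, hpar⟩
    · -- m = n + 1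
      have hIco : ∀ w : ℕ, ∑ u ∈ Finset.Ico n (n+1), (w + u) % (n+1) = (w + n) % (n+1) := by
        intro w
        rw [show Finset.Ico n (n+1) = {n} from by
          ext x; simp only [Finset.mem_Ico, Finset.mem_singleton]; omega]
        rw [Finset.sum_singleton]
      rw [hIco, hIco] at hE
      rcases modCase (n+1) (a.val + n) (by omega) with h1 | h1 <;>
        rcases modCase (n+1) (b.val + n) (by omega) with h2 | h2 <;> omega
    · -- m = n + 2, n odd
      have hIco : ∀ w : ℕ, ∑ u ∈ Finset.Ico n (n+2), (w + u) % (n+2)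
          = (w + n) % (n+2) + (w + (n+1)) % (n+2) := by
        intro w
        rw [show Finset.Ico n (n+2) = {n, n+1} from by
          ext x; simp only [Finset.mem_Ico, Finset.mem_insert, Finset.mem_singleton]; omega]
        rw [Finset.sum_insert (by simp), Finset.sum_singleton]
      rw [hIco, hIco] at hE
      rcases modCase (n+2) (a.val + n) (by omega) with h1 | h1 <;>
        rcases modCase (n+2) (a.val + (n+1)) (by omega) with h2 | h2 <;>
        rcases modCase (n+2) (b.val + n) (by omega) with h3 | h3 <;>
        rcases modCase (n+2) (b.val + (n+1)) (by omega) with h4 | h4 <;> omega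
end

section
/- Symmetric Lovász Local Lemma: let A_1,…,A_n be events in a probability space such that each A_i is mutually independent of a set of all but at most D of the other events, and P(A_i) ≤ p for all i. If e·p·(D+1) ≤ 1, then P(⋂_{i=1}^n complement(A_i)) > 0. -/
open MeasureTheory

private theorem lll_key {Ω : Type*} [MeasurableSpace Ω] (μ : Measure Ω)
    [IsProbabilityMeasure μ] {n : ℕ} (A : Fin n → Set Ω)
    (hA : ∀ i, MeasurableSet (A i)) {D : ℕ} {p x : ℝ}
    (Γ : Fin n → Finset (Fin n)) (hΓ : ∀ i, (Γ i).card ≤ D)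
    (hindep : ∀ i, ∀ T : Finset (Fin n), (∀ j ∈ T, j ≠ i ∧ j ∉ Γ i) →
      μ (A i ∩ ⋂ j ∈ T, (A j)ᶜ) = μ (A i) * μ (⋂ j ∈ T, (A j)ᶜ))
    (hp : ∀ i, (μ (A i)).toReal ≤ p)
    (hx0 : 0 ≤ x) (hx1 : x ≤ 1) (hxk : p ≤ x * (1 - x) ^ D) :
    ∀ m : ℕ, ∀ T : Finset (Fin n), T.card < m → ∀ i, i ∉ T →
      (μ (A i ∩ ⋂ j ∈ T, (A j)ᶜ)).toReal ≤ x * (μ (⋂ j ∈ T, (A j)ᶜ)).toReal := by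
  classical
  have hν_nonneg : ∀ S : Set Ω, 0 ≤ (μ S).toReal := fun S => ENNReal.toReal_nonneg
  have hν_mono : ∀ S V : Set Ω, S ⊆ V → (μ S).toReal ≤ (μ V).toReal := fun S V h =>
    ENNReal.toReal_mono (measure_ne_top μ V) (measure_mono h)
  have hν_split : ∀ (S : Set Ω) (j : Fin n),
      (μ (S ∩ A j)).toReal + (μ (S \ A j)).toReal = (μ S).toReal := by
    intro S j
    rw [← ENNReal.toReal_add (measure_ne_top _ _) (measure_ne_top _ _),
      measure_inter_add_diff S (hA j)]
  intro m
  induction m with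
  | zero => intro T hT; omega
  | succ m ih =>
    intro T hTcard i hiT
    set T1 : Finset (Fin n) := T ∩ Γ i with hT1
    set T2 : Finset (Fin n) := T \ Γ i with hT2
    have hunion : T1 ∪ T2 = T := by
      ext k; simp [hT1, hT2]; tauto
    -- Step A : independence over T2
    have hTcond : ∀ j ∈ T2, j ≠ i ∧ j ∉ Γ i := by
      intro j hj
      rcases Finset.mem_sdiff.1 hj with ⟨hjT, hjΓ⟩
      exact ⟨fun h => hiT (h ▸ hjT), hjΓ⟩
    have hindep2 : (μ (A i ∩ ⋂ j ∈ T2, (A j)ᶜ)).toReal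
        = (μ (A i)).toReal * (μ (⋂ j ∈ T2, (A j)ᶜ)).toReal := by
      rw [hindep i T2 hTcond, ENNReal.toReal_mul]
    -- Step B : peeling the events of T1
    have stepB : ∀ S : Finset (Fin n), S ⊆ T1 →
        (1 - x) ^ S.card * (μ (⋂ j ∈ T2, (A j)ᶜ)).toReal
          ≤ (μ (⋂ j ∈ S ∪ T2, (A j)ᶜ)).toReal := by
      intro S
      induction S using Finset.induction_on with
      | empty => intro _; simp
      | @insert j S hjS ihS =>
        intro hsub
        have hjT1 : j ∈ T1 := hsub (Finset.mem_insert_self _ _)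
        have hST1 : S ⊆ T1 := fun k hk => hsub (Finset.mem_insert_of_mem hk)
        have hjT : j ∈ T := (Finset.mem_inter.1 hjT1).1
        have hjΓ : j ∈ Γ i := (Finset.mem_inter.1 hjT1).2
        set U : Finset (Fin n) := S ∪ T2 with hU
        have hjU : j ∉ U := by
          simp only [hU, Finset.mem_union]
          rintro (h | h)
          · exact hjS h
          · exact (Finset.mem_sdiff.1 h).2 hjΓ
        have hUT : U ⊆ T := by
          intro k hk
          rcases Finset.mem_union.1 hk with h | h
          · exact (Finset.mem_inter.1 (hST1 h)).1
          · exact (Finset.mem_sdiff.1 h).1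
        have hUcard : U.card < m := by
          have h1 : U.card < T.card :=
            Finset.card_lt_card ((Finset.ssubset_iff_of_subset hUT).2 ⟨j, hjT, hjU⟩)
          omega
        have hIH : (μ (A j ∩ ⋂ k ∈ U, (A k)ᶜ)).toReal
            ≤ x * (μ (⋂ k ∈ U, (A k)ᶜ)).toReal := ih U hUcard j hjU
        have hset : (⋂ k ∈ insert j S ∪ T2, (A k)ᶜ) = (⋂ k ∈ U, (A k)ᶜ) \ A j := by
          rw [Finset.insert_union, Finset.set_biInter_insert, Set.diff_eq,
            Set.inter_comm]
        have hsplit := hν_split (⋂ k ∈ U, (A k)ᶜ) j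
        have hcomm : (⋂ k ∈ U, (A k)ᶜ) ∩ A j = A j ∩ ⋂ k ∈ U, (A k)ᶜ := Set.inter_comm _ _
        have hprev := ihS hST1
        have hxmul := mul_le_mul_of_nonneg_left hprev (by linarith : (0:ℝ) ≤ 1 - x)
        rw [hset, Finset.card_insert_of_notMem hjS, pow_succ]
        rw [hcomm] at hsplit
        nlinarith [hν_nonneg (⋂ k ∈ U, (A k)ᶜ)]
    -- Step C : combine
    have hB := stepB T1 (le_refl T1)
    rw [hunion] at hB
    have hsub2 : (⋂ j ∈ T, (A j)ᶜ) ⊆ ⋂ j ∈ T2, (A j)ᶜ := by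
      intro ω hω
      simp only [Set.mem_iInter] at hω ⊢
      intro k hk
      exact hω k (Finset.mem_sdiff.1 hk).1
    have h1 : (μ (A i ∩ ⋂ j ∈ T, (A j)ᶜ)).toReal
        ≤ (μ (A i ∩ ⋂ j ∈ T2, (A j)ᶜ)).toReal :=
      hν_mono _ _ (Set.inter_subset_inter_right _ hsub2)
    have h2 : (μ (A i)).toReal * (μ (⋂ j ∈ T2, (A j)ᶜ)).toReal
        ≤ p * (μ (⋂ j ∈ T2, (A j)ᶜ)).toReal :=
      mul_le_mul_of_nonneg_right (hp i) (hν_nonneg _)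
    have hT1card : T1.card ≤ D := le_trans (Finset.card_le_card Finset.inter_subset_right) (hΓ i)
    have hpow : (1 - x) ^ D ≤ (1 - x) ^ T1.card :=
      pow_le_pow_of_le_one (by linarith) (by linarith) hT1card
    have h3 : p ≤ x * (1 - x) ^ T1.card := by
      calc p ≤ x * (1 - x) ^ D := hxk
        _ ≤ x * (1 - x) ^ T1.card := mul_le_mul_of_nonneg_left hpow hx0
    calc (μ (A i ∩ ⋂ j ∈ T, (A j)ᶜ)).toReal
        ≤ (μ (A i ∩ ⋂ j ∈ T2, (A j)ᶜ)).toReal := h1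
      _ = (μ (A i)).toReal * (μ (⋂ j ∈ T2, (A j)ᶜ)).toReal := hindep2
      _ ≤ p * (μ (⋂ j ∈ T2, (A j)ᶜ)).toReal := h2
      _ ≤ (x * (1 - x) ^ T1.card) * (μ (⋂ j ∈ T2, (A j)ᶜ)).toReal :=
          mul_le_mul_of_nonneg_right h3 (hν_nonneg _)
      _ = x * ((1 - x) ^ T1.card * (μ (⋂ j ∈ T2, (A j)ᶜ)).toReal) := by ring
      _ ≤ x * (μ (⋂ j ∈ T, (A j)ᶜ)).toReal := mul_le_mul_of_nonneg_left hB hx0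

/-- Symmetric Lovász Local Lemma: if each event `A i` has probability at most `p`, is
mutually independent of all the events other than itself and those indexed by `Γ i`,
where `|Γ i| ≤ D`, and `e·p·(D+1) ≤ 1`, then with positive probability no event occurs. -/
theorem lovasz_local_lemma {Ω : Type*} [MeasurableSpace Ω] (μ : Measure Ω)
    [IsProbabilityMeasure μ] (n : ℕ) (A : Fin n → Set Ω)
    (hA : ∀ i, MeasurableSet (A i)) (D : ℕ) (p : ℝ)
    (Γ : Fin n → Finset (Fin n)) (hΓ : ∀ i, (Γ i).card ≤ D)
    (hindep : ∀ i, ∀ T : Finset (Fin n), (∀ j ∈ T, j ≠ i ∧ j ∉ Γ i) →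
      μ (A i ∩ ⋂ j ∈ T, (A j)ᶜ) = μ (A i) * μ (⋂ j ∈ T, (A j)ᶜ))
    (hp : ∀ i, μ (A i) ≤ ENNReal.ofReal p)
    (hcond : Real.exp 1 * p * (D + 1) ≤ 1) :
    0 < μ (⋂ i, (A i)ᶜ) := by
  classical
  rcases le_or_gt p 0 with hp0 | hp0
  · -- trivial case: all events are null
    have hz : ∀ i, μ (A i) = 0 := fun i =>
      le_antisymm (by simpa [ENNReal.ofReal_of_nonpos hp0] using hp i) zero_le
    have hU : μ (⋃ i, A i) = 0 := measure_iUnion_null hz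
    have hone : (1 : ENNReal) ≤ μ (⋂ i, (A i)ᶜ) := by
      calc (1 : ENNReal) = μ Set.univ := measure_univ.symm
        _ ≤ μ ((⋂ i, (A i)ᶜ) ∪ ⋃ i, A i) := measure_mono (by
            intro ω _
            by_cases h : ∃ i, ω ∈ A i
            · exact Or.inr (Set.mem_iUnion.2 h)
            · exact Or.inl (Set.mem_iInter.2 fun i hin => h ⟨i, hin⟩))
        _ ≤ μ (⋂ i, (A i)ᶜ) + μ (⋃ i, A i) := measure_union_le _ _
        _ = μ (⋂ i, (A i)ᶜ) := by rw [hU, add_zero]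
    exact lt_of_lt_of_le one_pos hone
  · -- main case
    set x : ℝ := 1 / ((D : ℝ) + 2) with hxdef
    have hd1 : (0 : ℝ) < (D : ℝ) + 1 := by positivity
    have hd2 : (0 : ℝ) < (D : ℝ) + 2 := by positivity
    have hx0 : 0 < x := by rw [hxdef]; positivity
    have hx1 : x < 1 := by
      rw [hxdef]
      rw [div_lt_one hd2]; linarith
    have hx' : 1 - x = ((D : ℝ) + 1) / ((D : ℝ) + 2) := by
      rw [hxdef]; field_simp; ring
    have hbase : ((D : ℝ) + 2) ^ (D + 1) ≤ Real.exp 1 * ((D : ℝ) + 1) ^ (D + 1) := by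
      have h1 : (1 + 1 / ((D : ℝ) + 1)) ≤ Real.exp (1 / ((D : ℝ) + 1)) := by
        have := Real.add_one_le_exp (1 / ((D : ℝ) + 1)); linarith
      have h2 : (1 + 1 / ((D : ℝ) + 1)) ^ (D + 1)
          ≤ Real.exp (1 / ((D : ℝ) + 1)) ^ (D + 1) :=
        pow_le_pow_left₀ (by positivity) h1 (D + 1)
      have h3 : Real.exp (1 / ((D : ℝ) + 1)) ^ (D + 1) = Real.exp 1 := by
        rw [← Real.exp_nat_mul]
        congr 1
        push_cast
        field_simp
      have h4 : ((D : ℝ) + 2) ^ (D + 1)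
          = (1 + 1 / ((D : ℝ) + 1)) ^ (D + 1) * ((D : ℝ) + 1) ^ (D + 1) := by
        rw [← mul_pow]
        congr 1
        field_simp
        ring
      rw [h4]
      rw [h3] at h2
      exact mul_le_mul_of_nonneg_right h2 (by positivity) |>.trans_eq rfl
    have hxk : p ≤ x * (1 - x) ^ D := by
      have e1 : x * (1 - x) ^ D = ((D : ℝ) + 1) ^ D / ((D : ℝ) + 2) ^ (D + 1) := by
        rw [hx', hxdef, div_pow, pow_succ]
        field_simp
      have h5 : 1 ≤ Real.exp 1 * ((D : ℝ) + 1) * (x * (1 - x) ^ D) := by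
        rw [e1, ← mul_div_assoc, le_div_iff₀ (by positivity), one_mul]
        calc ((D : ℝ) + 2) ^ (D + 1) ≤ Real.exp 1 * ((D : ℝ) + 1) ^ (D + 1) := hbase
          _ = Real.exp 1 * ((D : ℝ) + 1) * ((D : ℝ) + 1) ^ D := by rw [pow_succ]; ring
      have ht0 : 0 ≤ x * (1 - x) ^ D := by
        apply mul_nonneg hx0.le (pow_nonneg (by linarith) D)
      calc p = p * 1 := (mul_one p).symm
        _ ≤ p * (Real.exp 1 * ((D : ℝ) + 1) * (x * (1 - x) ^ D)) :=
            mul_le_mul_of_nonneg_left h5 hp0.le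
        _ = (Real.exp 1 * p * ((D : ℝ) + 1)) * (x * (1 - x) ^ D) := by ring
        _ ≤ 1 * (x * (1 - x) ^ D) := mul_le_mul_of_nonneg_right hcond ht0
        _ = x * (1 - x) ^ D := one_mul _
    have hp' : ∀ i, (μ (A i)).toReal ≤ p := fun i =>
      ENNReal.toReal_le_of_le_ofReal hp0.le (hp i)
    have key := lll_key μ A hA Γ hΓ hindep hp' hx0.le hx1.le hxk
    have hν_split : ∀ (S : Set Ω) (j : Fin n),
        (μ (S ∩ A j)).toReal + (μ (S \ A j)).toReal = (μ S).toReal := by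
      intro S j
      rw [← ENNReal.toReal_add (measure_ne_top _ _) (measure_ne_top _ _),
        measure_inter_add_diff S (hA j)]
    have final : ∀ S : Finset (Fin n), (1 - x) ^ S.card ≤ (μ (⋂ j ∈ S, (A j)ᶜ)).toReal := by
      intro S
      induction S using Finset.induction_on with
      | empty => simp
      | @insert j S hjS ihS =>
        have hkey := key (S.card + 1) S (lt_add_one _) j hjS
        have hsplit := hν_split (⋂ k ∈ S, (A k)ᶜ) j
        have hset : (⋂ k ∈ insert j S, (A k)ᶜ) = (⋂ k ∈ S, (A k)ᶜ) \ A j := by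
          rw [Finset.set_biInter_insert, Set.diff_eq, Set.inter_comm]
        have hcomm : (⋂ k ∈ S, (A k)ᶜ) ∩ A j = A j ∩ ⋂ k ∈ S, (A k)ᶜ := Set.inter_comm _ _
        rw [hset, Finset.card_insert_of_notMem hjS, pow_succ]
        rw [hcomm] at hsplit
        nlinarith [ihS, hx0, hx1, mul_le_mul_of_nonneg_left ihS (sub_nonneg.2 hx1.le)]
    have hfin := final Finset.univ
    have hAll : (⋂ j ∈ (Finset.univ : Finset (Fin n)), (A j)ᶜ) = ⋂ i, (A i)ᶜ := by
      simp
    rw [hAll] at hfin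
    have hpos : 0 < (μ (⋂ i, (A i)ᶜ)).toReal :=
      lt_of_lt_of_le (pow_pos (by linarith) _) hfin
    refine pos_iff_ne_zero.2 fun h => ?_
    rw [h] at hpos
    simp at hpos
end
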